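/- Every symmetric nonnegative matrix A of rank 2 has SNT-rank equal to 2. -/

import Mathlib

open Matrix

noncomputable def sntRank {m : Type*} [Fintype m] (A : Matrix m m ℝ) : ℕ :=
  sInf {k : ℕ | ∃ B : Matrix m (Fin k) ℝ, ∃ C : Matrix (Fin k) (Fin k) ℝ,
    (∀ i j, 0 ≤ B i j) ∧ (∀ i j, 0 ≤ C i j) ∧ C.IsSymm ∧ A = B * C * Bᵀ}

theorem stmt_12 {n : ℕ} (A : Matrix (Fin n) (Fin n) ℝ)
    (hA : A.IsSymm) (hApos : ∀ i j, 0 ≤ A i j) (hrank : A.rank = 2) :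
    sntRank A = 2 := by
  classical
  have hsym : ∀ p q : Fin n, A p q = A q p := fun p q => hA.apply q p
  -- extract two independent columns spanning the column space
  obtain ⟨b, hbs, hspan, hbindep⟩ := exists_linearIndependent ℝ (Set.range Aᵀ)
  have hbfin : b.Finite := (Set.finite_range Aᵀ).subset hbs
  haveI := hbfin.fintype
  have hcard : b.toFinset.card = 2 := by
    have h1 := finrank_span_set_eq_card hbindep
    rw [hspan, show Set.range Aᵀ = Set.range A.col from rfl, ← Matrix.rank_eq_finrank_span_cols, hrank] at h1
    exact h1.symm
  obtain ⟨u, w, huw, hbuw⟩ := Finset.card_eq_two.mp hcard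
  have hbset : b = {u, w} := by
    rw [← Set.coe_toFinset b, hbuw]; simp
  have hcolspan : ∀ j, (fun i => A i j) ∈ Submodule.span ℝ ({u, w} : Set (Fin n → ℝ)) := by
    intro j
    rw [← hbset, hspan]
    exact Submodule.subset_span ⟨j, rfl⟩
  have hu0 : ∀ i, 0 ≤ u i := by
    have hu : u ∈ Set.range Aᵀ := hbs (by rw [hbset]; exact Set.mem_insert u {w})
    obtain ⟨j, hj⟩ := hu
    intro i; rw [← hj]; exact hApos i j
  have hw0 : ∀ i, 0 ≤ w i := by
    have hw : w ∈ Set.range Aᵀ := hbs (by rw [hbset]; exact Set.mem_insert_of_mem u rfl)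
    obtain ⟨j, hj⟩ := hw
    intro i; rw [← hj]; exact hApos i j
  have hpair : ∀ x y : ℝ, x • u + y • w = 0 → x = 0 ∧ y = 0 := by
    have hinj : Function.Injective ![u, w] := by
      intro i j hij
      fin_cases i <;> fin_cases j <;> simp_all
    have hr : Set.range ![u, w] = b := by
      rw [Matrix.range_cons_cons_empty, hbset]
    rw [← hr] at hbindep
    exact fun x y h => LinearIndependent.pair_iff.mp
      ((linearIndepOn_id_range_iff hinj).mp hbindep) x y h
  -- the support set
  set S : Finset (Fin n) := Finset.univ.filter (fun i => u i ≠ 0 ∨ w i ≠ 0) with hSdef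
  have hSmem : ∀ i, i ∈ S ↔ (u i ≠ 0 ∨ w i ≠ 0) := by intro i; simp [hSdef]
  have hSd : ∀ i ∈ S, 0 < u i + w i := by
    intro i hi
    rcases (hSmem i).mp hi with h | h
    · have : 0 < u i := (hu0 i).lt_of_ne (Ne.symm h)
      linarith [hw0 i]
    · have : 0 < w i := (hw0 i).lt_of_ne (Ne.symm h)
      linarith [hu0 i]
  have hS0 : ∀ i, i ∉ S → u i = 0 ∧ w i = 0 := by
    intro i hi
    constructor
    · by_contra h; exact hi ((hSmem i).mpr (Or.inl h))
    · by_contra h; exact hi ((hSmem i).mpr (Or.inr h))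
  have hSne : S.Nonempty := by
    by_contra h
    rw [Finset.not_nonempty_iff_eq_empty] at h
    have hu : (1:ℝ) • u + (0:ℝ) • w = 0 := by
      funext i
      have := hS0 i (by rw [h]; exact Finset.notMem_empty i)
      simp [this.1]
    exact one_ne_zero (hpair 1 0 hu).1
  set t : Fin n → ℝ := fun i => w i / (u i + w i) with htdef
  obtain ⟨ia, hia, hmin⟩ := S.exists_min_image t hSne
  obtain ⟨ib, hib, hmax⟩ := S.exists_max_image t hSne
  have hcross : ∀ i ∈ S, ∀ j ∈ S,
      u i * w j - w i * u j = (t j - t i) * ((u i + w i) * (u j + w j)) := by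
    intro i hi j hj
    have di := hSd i hi
    have dj := hSd j hj
    rw [htdef]
    field_simp
    ring
  have hG1 : ∀ i, 0 ≤ u i * w ib - w i * u ib := by
    intro i
    by_cases hi : i ∈ S
    · rw [hcross i hi ib hib]
      have h1 : t i ≤ t ib := hmax i hi
      have d1 := hSd i hi
      have d2 := hSd ib hib
      exact mul_nonneg (sub_nonneg.mpr h1) (mul_pos d1 d2).le
    · obtain ⟨h1, h2⟩ := hS0 i hi
      rw [h1, h2]; ring_nf; exact le_refl 0
  have hG2 : ∀ i, 0 ≤ u ia * w i - w ia * u i := by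
    intro i
    by_cases hi : i ∈ S
    · rw [hcross ia hia i hi]
      have h1 : t ia ≤ t i := hmin i hi
      have d1 := hSd i hi
      have d2 := hSd ia hia
      exact mul_nonneg (sub_nonneg.mpr h1) (mul_pos d2 d1).le
    · obtain ⟨h1, h2⟩ := hS0 i hi
      rw [h1, h2]; ring_nf; exact le_refl 0
  set D : ℝ := u ia * w ib - w ia * u ib with hDdef
  have hD0 : 0 ≤ D := hG1 ia
  have hDpos : 0 < D := by
    rcases hD0.lt_or_eq with h | h
    · exact h
    · exfalso
      have hab : t ia = t ib := by
        have hc := hcross ia hia ib hib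
        have d1 := hSd ia hia
        have d2 := hSd ib hib
        have h2 : t ia ≤ t ib := hmin ib hib
        rw [hDdef] at h
        have hz : (t ib - t ia) * ((u ia + w ia) * (u ib + w ib)) = 0 := by linarith
        rcases mul_eq_zero.mp hz with h' | h'
        · linarith
        · nlinarith [mul_pos d1 d2]
      have hall : ∀ i, u ia * w i - w ia * u i = 0 := by
        intro i
        by_cases hi : i ∈ S
        · have h1 : t ia ≤ t i := hmin i hi
          have h2 : t i ≤ t ib := hmax i hi
          have h3 : t i = t ia := le_antisymm (hab ▸ h2) h1
          rw [hcross ia hia i hi, h3]; ring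
        · obtain ⟨h1, h2⟩ := hS0 i hi
          rw [h1, h2]; ring
      have heq : (-(w ia)) • u + (u ia) • w = 0 := by
        funext i
        have := hall i
        simp only [Pi.add_apply, Pi.smul_apply, smul_eq_mul, Pi.zero_apply]
        linarith
      obtain ⟨h1, h2⟩ := hpair _ _ heq
      rcases (hSmem ia).mp hia with h' | h'
      · exact h' h2
      · exact h' (neg_eq_zero.mp h1)
  have hDne : D ≠ 0 := ne_of_gt hDpos
  -- key decomposition of columns
  have key1 : ∀ j i, D * A i j =
      A ia j * (u i * w ib - w i * u ib) + A ib j * (u ia * w i - w ia * u i) := by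
    intro j
    obtain ⟨x, y, hxy⟩ := Submodule.mem_span_pair.mp (hcolspan j)
    have hv : ∀ i, A i j = x * u i + y * w i := by
      intro i
      have h := congrFun hxy i
      simp only [Pi.add_apply, Pi.smul_apply, smul_eq_mul] at h
      exact h.symm
    intro i
    rw [hv i, hv ia, hv ib, hDdef]
    ring
  -- membership of 2
  have h2mem : ∃ B : Matrix (Fin n) (Fin 2) ℝ, ∃ C : Matrix (Fin 2) (Fin 2) ℝ,
      (∀ i j, 0 ≤ B i j) ∧ (∀ i j, 0 ≤ C i j) ∧ C.IsSymm ∧ A = B * C * Bᵀ := by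
    refine ⟨Matrix.of (fun i l => ![u i * w ib - w i * u ib, u ia * w i - w ia * u i] l),
      !![A ia ia / D^2, A ia ib / D^2; A ib ia / D^2, A ib ib / D^2], ?_, ?_, ?_, ?_⟩
    · intro i l
      fin_cases l
      · simpa using hG1 i
      · simpa using hG2 i
    · intro l m
      fin_cases l <;> fin_cases m <;>
        simp only [Matrix.cons_val', Matrix.cons_val_zero, Matrix.cons_val_one,
          Matrix.head_cons, Matrix.head_fin_const, Matrix.of_apply, Matrix.empty_val',
          Matrix.cons_val_fin_one] <;>
        exact div_nonneg (hApos _ _) (by positivity)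
    · apply Matrix.IsSymm.ext
      intro l m
      fin_cases l <;> fin_cases m <;>
        simp [hsym ia ib]
    · ext i j
      simp only [Matrix.mul_apply, Matrix.transpose_apply, Fin.sum_univ_two,
        Matrix.of_apply, Matrix.cons_val_zero, Matrix.cons_val_one, Matrix.head_cons,
        Matrix.cons_val', Matrix.empty_val', Matrix.cons_val_fin_one, Matrix.head_fin_const]
      have e1 := key1 j i
      have e2 := key1 ia j
      have e3 := key1 ib j
      have hs1 : A j ia = A ia j := hsym j ia
      have hs2 : A j ib = A ib j := hsym j ib
      have hs3 : A ib ia = A ia ib := hsym ib ia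
      have key2 : D ^ 2 * A i j =
          A ia ia * ((u i * w ib - w i * u ib) * (u j * w ib - w j * u ib)) +
          A ia ib * ((u i * w ib - w i * u ib) * (u ia * w j - w ia * u j)) +
          A ib ia * ((u ia * w i - w ia * u i) * (u j * w ib - w j * u ib)) +
          A ib ib * ((u ia * w i - w ia * u i) * (u ia * w j - w ia * u j)) := by
        linear_combination D * e1 + (u i * w ib - w i * u ib) * e2 +
          (u ia * w i - w ia * u i) * e3 - (D * (u i * w ib - w i * u ib)) * hs1 -
          (D * (u ia * w i - w ia * u i)) * hs2 +
          ((u i * w ib - w i * u ib) * (u ia * w j - w ia * u j) -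
            (u ia * w i - w ia * u i) * (u j * w ib - w j * u ib)) * hs3
      field_simp
      linear_combination key2
  -- lower bound
  have hlow : ∀ k : ℕ, (∃ B : Matrix (Fin n) (Fin k) ℝ, ∃ C : Matrix (Fin k) (Fin k) ℝ,
      (∀ i j, 0 ≤ B i j) ∧ (∀ i j, 0 ≤ C i j) ∧ C.IsSymm ∧ A = B * C * Bᵀ) → 2 ≤ k := by
    rintro k ⟨B, C, -, -, -, hfac⟩
    have h1 : A.rank ≤ k := by
      calc A.rank = (B * C * Bᵀ).rank := by rw [hfac]
        _ ≤ (B * C).rank := Matrix.rank_mul_le_left _ _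
        _ ≤ B.rank := Matrix.rank_mul_le_left _ _
        _ ≤ Fintype.card (Fin k) := Matrix.rank_le_card_width B
        _ = k := Fintype.card_fin k
    omega
  unfold sntRank
  apply le_antisymm
  · exact Nat.sInf_le h2mem
  · exact le_csInf ⟨2, h2mem⟩ (fun k hk => hlow k hk)
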